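/- Let 0 ≤ λ_1,...,λ_m < 1/2 and let a_1,...,a_n ∈ R^d satisfy ρ(a_1,...,a_n) ≤ λ_1·λ_2·...·λ_m. Then there exists a partition {1,...,n} = I_1 ⊔ ... ⊔ I_m such that for each j, max_{x∈R^d} Pr(Σ_{i∈I_j} a_iξ_i = x) ≤ 2λ_j. -/

import Mathlib

open Finset
open scoped Classical

/-- Probability of an event over uniformly random sign vectors in `{-1,1}^n`
(encoded as `Fin n → Bool`). -/
noncomputable def rprob {n : ℕ} (P : (Fin n → Bool) → Prop) : ℝ :=
  ((Finset.univ : Finset (Fin n → Bool)).filter P).card / 2 ^ n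

/-- The Rademacher sum `∑_{i ∈ I} ξ_i a_i` for a sign vector `ε`. -/
noncomputable def radSumOn {n d : ℕ} (a : Fin n → EuclideanSpace ℝ (Fin d))
    (I : Finset (Fin n)) (ε : Fin n → Bool) : EuclideanSpace ℝ (Fin d) :=
  ∑ i ∈ I, (if ε i then (1 : ℝ) else -1) • a i

/-- The full Rademacher sum `a_1 ξ_1 + ⋯ + a_n ξ_n`. -/
noncomputable def radSum {n d : ℕ} (a : Fin n → EuclideanSpace ℝ (Fin d))
    (ε : Fin n → Bool) : EuclideanSpace ℝ (Fin d) :=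
  radSumOn a Finset.univ ε

/-- `ρ((a_i)_{i ∈ I}) = max_{x ∈ ℝ^d} Pr(∑_{i ∈ I} a_i ξ_i = x)`. -/
noncomputable def rhoOn {n d : ℕ} (a : Fin n → EuclideanSpace ℝ (Fin d))
    (I : Finset (Fin n)) : ℝ :=
  sSup {p : ℝ | ∃ x, p = rprob (fun ε => radSumOn a I ε = x)}

namespace Stmt3Aux

attribute [-instance] WithLp.instDecidableEq

variable {n d : ℕ}

lemma two_pow_pos : (0:ℝ) < 2 ^ n := by positivity

lemma rprob_nonneg (P : (Fin n → Bool) → Prop) : 0 ≤ rprob P := by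
  unfold rprob; positivity

lemma card_univ_bool : (Finset.univ : Finset (Fin n → Bool)).card = 2 ^ n := by
  simp [Finset.card_univ]

lemma rprob_le_one (P : (Fin n → Bool) → Prop) : rprob P ≤ 1 := by
  unfold rprob
  rw [div_le_one two_pow_pos]
  have := Finset.card_filter_le (Finset.univ : Finset (Fin n → Bool)) P
  rw [card_univ_bool] at this
  exact_mod_cast this

lemma radSumOn_congr (a : Fin n → EuclideanSpace ℝ (Fin d)) (I : Finset (Fin n))
    {ε ε' : Fin n → Bool} (h : ∀ i ∈ I, ε i = ε' i) :
    radSumOn a I ε = radSumOn a I ε' :=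
  Finset.sum_congr rfl fun i hi => by rw [h i hi]

lemma rho_spec (a : Fin n → EuclideanSpace ℝ (Fin d)) (I : Finset (Fin n)) :
    (∃ x, rhoOn a I = rprob (fun ε => radSumOn a I ε = x)) ∧
    (∀ x, rprob (fun ε => radSumOn a I ε = x) ≤ rhoOn a I) := by
  set T := {p : ℝ | ∃ x, p = rprob (fun ε => radSumOn a I ε = x)} with hT
  have hfin : T.Finite := by
    apply Set.Finite.subset
      ((Set.finite_Iio (2 ^ n + 1 : ℕ)).image (fun k : ℕ => (k : ℝ) / 2 ^ n))
    rintro p ⟨x, rfl⟩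
    refine Set.mem_image_of_mem _ (Set.mem_Iio.2 ?_)
    have := Finset.card_filter_le (Finset.univ : Finset (Fin n → Bool))
      (fun ε => radSumOn a I ε = x)
    rw [card_univ_bool] at this
    exact Nat.lt_succ_of_le this
  have hne : T.Nonempty := ⟨rprob (fun ε => radSumOn a I ε = 0), 0, rfl⟩
  constructor
  · exact hne.csSup_mem hfin
  · intro x
    exact le_csSup hfin.bddAbove ⟨x, rfl⟩

lemma rho_nonneg (a : Fin n → EuclideanSpace ℝ (Fin d)) (I : Finset (Fin n)) :
    0 ≤ rhoOn a I :=
  le_trans (rprob_nonneg _) ((rho_spec a I).2 0)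

lemma rho_pos (a : Fin n → EuclideanSpace ℝ (Fin d)) (I : Finset (Fin n)) :
    0 < rhoOn a I := by
  have h := (rho_spec a I).2 (radSumOn a I (fun _ => true))
  refine lt_of_lt_of_le ?_ h
  unfold rprob
  apply div_pos _ two_pow_pos
  have : (fun _ => true) ∈ Finset.univ.filter
      (fun ε => radSumOn a I ε = radSumOn a I (fun _ => true)) := by
    simp
  have hpos := Finset.card_pos.2 ⟨_, this⟩
  exact_mod_cast hpos

lemma rho_empty (a : Fin n → EuclideanSpace ℝ (Fin d)) :
    1 ≤ rhoOn a (∅ : Finset (Fin n)) := by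
  have h := (rho_spec a ∅).2 0
  refine le_trans ?_ h
  unfold rprob
  have : (Finset.univ.filter (fun ε : Fin n → Bool => radSumOn a ∅ ε = 0)) = Finset.univ := by
    apply Finset.filter_true_of_mem
    intro ε _
    simp [radSumOn]
  rw [this, card_univ_bool]
  rw [le_div_iff₀ two_pow_pos]
  simp

end Stmt3Aux

namespace Stmt3Aux

attribute [-instance] WithLp.instDecidableEq

variable {n d : ℕ}

lemma flip_flip {i : Fin n} (ε : Fin n → Bool) :
    Function.update (Function.update ε i (!ε i)) i (!(Function.update ε i (!ε i)) i) = ε := by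
  funext k
  by_cases h : k = i
  · subst h; simp
  · simp [Function.update_of_ne h]

lemma radSumOn_update (a : Fin n → EuclideanSpace ℝ (Fin d)) {J : Finset (Fin n)} {i : Fin n}
    (hi : i ∉ J) (ε : Fin n → Bool) (b : Bool) :
    radSumOn a J (Function.update ε i b) = radSumOn a J ε :=
  radSumOn_congr a J fun k hk => Function.update_of_ne (fun h => hi (by rw [← h]; exact hk)) _ _

lemma card_flip (a : Fin n → EuclideanSpace ℝ (Fin d)) (J : Finset (Fin n)) {i : Fin n}
    (hi : i ∉ J) (x : EuclideanSpace ℝ (Fin d)) :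
    (Finset.univ.filter (fun ε : Fin n → Bool => radSumOn a J ε = x)).card
      = 2 * (Finset.univ.filter
          (fun ε : Fin n → Bool => ε i = true ∧ radSumOn a J ε = x)).card := by
  have hu : (Finset.univ.filter (fun ε : Fin n → Bool => ε i = true ∧ radSumOn a J ε = x))
      ∪ (Finset.univ.filter (fun ε : Fin n → Bool => ¬ (ε i = true) ∧ radSumOn a J ε = x))
      = Finset.univ.filter (fun ε : Fin n → Bool => radSumOn a J ε = x) := by
    ext ε
    simp only [Finset.mem_union, Finset.mem_filter, Finset.mem_univ, true_and]
    tauto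
  have hd : Disjoint
      (Finset.univ.filter (fun ε : Fin n → Bool => ε i = true ∧ radSumOn a J ε = x))
      (Finset.univ.filter (fun ε : Fin n → Bool => ¬ (ε i = true) ∧ radSumOn a J ε = x)) := by
    rw [Finset.disjoint_left]
    intro ε h1 h2
    simp only [Finset.mem_filter, Finset.mem_univ, true_and] at h1 h2
    exact h2.1 h1.1
  have hbij :
      (Finset.univ.filter (fun ε : Fin n → Bool => ¬ (ε i = true) ∧ radSumOn a J ε = x)).card
      = (Finset.univ.filter (fun ε : Fin n → Bool => ε i = true ∧ radSumOn a J ε = x)).card := by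
    refine Finset.card_nbij' (fun ε => Function.update ε i (!ε i))
      (fun ε => Function.update ε i (!ε i)) ?_ ?_ ?_ ?_
    · intro ε hε
      simp only [Finset.mem_coe, Finset.mem_filter, Finset.mem_univ, true_and] at hε ⊢
      refine ⟨?_, by rw [radSumOn_update a hi]; exact hε.2⟩
      have : ε i = false := by simpa using hε.1
      simp [this]
    · intro ε hε
      simp only [Finset.mem_coe, Finset.mem_filter, Finset.mem_univ, true_and] at hε ⊢
      refine ⟨?_, by rw [radSumOn_update a hi]; exact hε.2⟩
      simp [hε.1]
    · intro ε _
      exact flip_flip (i := i) ε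
    · intro ε _
      exact flip_flip (i := i) ε
  have h2 := Finset.card_union_of_disjoint hd
  rw [hu] at h2
  rw [hbij] at h2
  rw [h2, two_mul]

lemma rho_half (a : Fin n → EuclideanSpace ℝ (Fin d)) {J : Finset (Fin n)} {i : Fin n}
    (hi : i ∉ J) : rhoOn a J ≤ 2 * rhoOn a (insert i J) := by
  obtain ⟨x, hx⟩ := (rho_spec a J).1
  have hsub : (Finset.univ.filter (fun ε : Fin n → Bool => ε i = true ∧ radSumOn a J ε = x))
      ⊆ Finset.univ.filter (fun ε : Fin n → Bool => radSumOn a (insert i J) ε = x + a i) := by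
    intro ε hε
    simp only [Finset.mem_filter, Finset.mem_univ, true_and] at hε ⊢
    rw [radSumOn, Finset.sum_insert hi, hε.1]
    rw [← radSumOn] at *
    rw [hε.2]
    simp [add_comm]
  have hcard := Finset.card_le_card hsub
  have hflip := card_flip a J hi x
  have key : rprob (fun ε => radSumOn a J ε = x)
      ≤ 2 * rprob (fun ε => radSumOn a (insert i J) ε = x + a i) := by
    unfold rprob
    rw [div_le_iff₀ two_pow_pos]
    have : ((Finset.univ.filter (fun ε : Fin n → Bool => radSumOn a J ε = x)).card : ℝ)
        ≤ 2 * (Finset.univ.filter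
          (fun ε : Fin n → Bool => radSumOn a (insert i J) ε = x + a i)).card := by
      rw [hflip]
      push_cast
      have : ((Finset.univ.filter
          (fun ε : Fin n → Bool => ε i = true ∧ radSumOn a J ε = x)).card : ℝ)
          ≤ ((Finset.univ.filter
          (fun ε : Fin n → Bool => radSumOn a (insert i J) ε = x + a i)).card : ℝ) := by
        exact_mod_cast hcard
      linarith
    calc ((Finset.univ.filter (fun ε : Fin n → Bool => radSumOn a J ε = x)).card : ℝ)
        ≤ 2 * (Finset.univ.filter
          (fun ε : Fin n → Bool => radSumOn a (insert i J) ε = x + a i)).card := this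
      _ = 2 * ((Finset.univ.filter
          (fun ε : Fin n → Bool => radSumOn a (insert i J) ε = x + a i)).card / 2 ^ n) * 2 ^ n := by
          field_simp
  calc rhoOn a J = rprob (fun ε => radSumOn a J ε = x) := hx
    _ ≤ 2 * rprob (fun ε => radSumOn a (insert i J) ε = x + a i) := key
    _ ≤ 2 * rhoOn a (insert i J) := by
        have := (rho_spec a (insert i J)).2 (x + a i)
        linarith

noncomputable def merge (I : Finset (Fin n)) (ε η : Fin n → Bool) : Fin n → Bool :=
  fun k => if k ∈ I then ε k else η k

lemma merge_mem {I : Finset (Fin n)} {k : Fin n} (hk : k ∈ I) (ε η : Fin n → Bool) :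
    merge I ε η k = ε k := if_pos hk

lemma merge_not_mem {I : Finset (Fin n)} {k : Fin n} (hk : k ∉ I) (ε η : Fin n → Bool) :
    merge I ε η k = η k := if_neg hk

lemma card_indep (a : Fin n → EuclideanSpace ℝ (Fin d)) {I J : Finset (Fin n)}
    (hIJ : Disjoint I J) (x y : EuclideanSpace ℝ (Fin d)) :
    (Finset.univ.filter (fun ε : Fin n → Bool => radSumOn a I ε = x)).card *
      (Finset.univ.filter (fun ε : Fin n → Bool => radSumOn a J ε = y)).card
    = (Finset.univ.filter
        (fun ε : Fin n → Bool => radSumOn a I ε = x ∧ radSumOn a J ε = y)).card * 2 ^ n := by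
  have hJI : ∀ k ∈ J, k ∉ I := fun k hk => (Finset.disjoint_right.1 hIJ) hk
  have hmain :
      ((Finset.univ.filter (fun ε : Fin n → Bool => radSumOn a I ε = x)) ×ˢ
        (Finset.univ.filter (fun ε : Fin n → Bool => radSumOn a J ε = y))).card
      = ((Finset.univ.filter
          (fun ε : Fin n → Bool => radSumOn a I ε = x ∧ radSumOn a J ε = y)) ×ˢ
          (Finset.univ : Finset (Fin n → Bool))).card := by
    refine Finset.card_nbij' (fun p => (merge I p.1 p.2, merge I p.2 p.1))
      (fun p => (merge I p.1 p.2, merge I p.2 p.1)) ?_ ?_ ?_ ?_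
    · rintro ⟨ε, η⟩ hp
      simp only [Finset.mem_coe, Finset.mem_product, Finset.mem_filter, Finset.mem_univ, true_and] at hp ⊢
      refine ⟨⟨?_, ?_⟩, trivial⟩
      · rw [radSumOn_congr a I (fun k hk => merge_mem hk ε η)]; exact hp.1
      · rw [radSumOn_congr a J (fun k hk => merge_not_mem (hJI k hk) ε η)]; exact hp.2
    · rintro ⟨σ, τ⟩ hp
      simp only [Finset.mem_coe, Finset.mem_product, Finset.mem_filter, Finset.mem_univ, true_and, and_true] at hp ⊢
      constructor
      · rw [radSumOn_congr a I (fun k hk => merge_mem hk σ τ)]; exact hp.1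
      · rw [radSumOn_congr a J (fun k hk => merge_not_mem (hJI k hk) τ σ)]; exact hp.2
    · rintro ⟨ε, η⟩ _
      simp only [Prod.mk.injEq]
      constructor <;> funext k <;> by_cases hk : k ∈ I <;>
        simp [merge, hk]
    · rintro ⟨σ, τ⟩ _
      simp only [Prod.mk.injEq]
      constructor <;> funext k <;> by_cases hk : k ∈ I <;>
        simp [merge, hk]
  rw [Finset.card_product, Finset.card_product, card_univ_bool] at hmain
  exact hmain

lemma rho_submul (a : Fin n → EuclideanSpace ℝ (Fin d)) {I J : Finset (Fin n)}
    (hIJ : Disjoint I J) : rhoOn a I * rhoOn a J ≤ rhoOn a (I ∪ J) := by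
  obtain ⟨x, hx⟩ := (rho_spec a I).1
  obtain ⟨y, hy⟩ := (rho_spec a J).1
  have hsub : (Finset.univ.filter
      (fun ε : Fin n → Bool => radSumOn a I ε = x ∧ radSumOn a J ε = y))
      ⊆ Finset.univ.filter (fun ε : Fin n → Bool => radSumOn a (I ∪ J) ε = x + y) := by
    intro ε hε
    simp only [Finset.mem_filter, Finset.mem_univ, true_and] at hε ⊢
    rw [radSumOn, Finset.sum_union hIJ, ← radSumOn, ← radSumOn, hε.1, hε.2]
  have hcard := Finset.card_le_card hsub
  have hind := card_indep a hIJ x y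
  have key : rprob (fun ε => radSumOn a I ε = x) * rprob (fun ε => radSumOn a J ε = y)
      ≤ rprob (fun ε => radSumOn a (I ∪ J) ε = x + y) := by
    unfold rprob
    rw [div_mul_div_comm, div_le_div_iff₀ (by positivity) two_pow_pos]
    have e1 : ((Finset.univ.filter (fun ε : Fin n → Bool => radSumOn a I ε = x)).card : ℝ) *
        (Finset.univ.filter (fun ε : Fin n → Bool => radSumOn a J ε = y)).card
        = ((Finset.univ.filter
          (fun ε : Fin n → Bool => radSumOn a I ε = x ∧ radSumOn a J ε = y)).card : ℝ) * 2 ^ n := by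
      exact_mod_cast congrArg (Nat.cast : ℕ → ℝ) hind
    rw [e1]
    have e2 : ((Finset.univ.filter
        (fun ε : Fin n → Bool => radSumOn a I ε = x ∧ radSumOn a J ε = y)).card : ℝ)
        ≤ ((Finset.univ.filter
          (fun ε : Fin n → Bool => radSumOn a (I ∪ J) ε = x + y)).card : ℝ) := by
      exact_mod_cast hcard
    calc ((Finset.univ.filter
        (fun ε : Fin n → Bool => radSumOn a I ε = x ∧ radSumOn a J ε = y)).card : ℝ) * 2 ^ n * 2 ^ n
        ≤ ((Finset.univ.filter
          (fun ε : Fin n → Bool => radSumOn a (I ∪ J) ε = x + y)).card : ℝ) * 2 ^ n * 2 ^ n := by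
          exact mul_le_mul_of_nonneg_right (mul_le_mul_of_nonneg_right e2 (le_of_lt two_pow_pos)) (le_of_lt two_pow_pos)
      _ = ((Finset.univ.filter
          (fun ε : Fin n → Bool => radSumOn a (I ∪ J) ε = x + y)).card : ℝ) * (2 ^ n * 2 ^ n) := by
          ring
  calc rhoOn a I * rhoOn a J
      = rprob (fun ε => radSumOn a I ε = x) * rprob (fun ε => radSumOn a J ε = y) := by
        rw [hx, hy]
    _ ≤ rprob (fun ε => radSumOn a (I ∪ J) ε = x + y) := key
    _ ≤ rhoOn a (I ∪ J) := (rho_spec a (I ∪ J)).2 _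

lemma main (a : Fin n → EuclideanSpace ℝ (Fin d)) :
    ∀ (m : ℕ) (lam : Fin (m+1) → ℝ) (S : Finset (Fin n)),
      (∀ j, 0 ≤ lam j) → (∀ j, lam j < 1/2) → rhoOn a S ≤ ∏ j, lam j →
      ∃ parts : Fin (m+1) → Finset (Fin n),
        (∀ j k, j ≠ k → Disjoint (parts j) (parts k)) ∧
        (∀ i ∈ S, ∃ j, i ∈ parts j) ∧
        (∀ j, parts j ⊆ S) ∧
        (∀ j, rhoOn a (parts j) ≤ 2 * lam j) := by
  intro m
  induction m with
  | zero =>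
      intro lam S h0 h1 hrho
      refine ⟨fun _ => S, ?_, ?_, ?_, ?_⟩
      · intro j k hjk
        exact absurd ((Fin.fin_one_eq_zero j).trans (Fin.fin_one_eq_zero k).symm) hjk
      · exact fun i hi => ⟨0, hi⟩
      · intro j; exact subset_rfl
      · intro j
        have hp : ∏ j : Fin 1, lam j = lam 0 := by simp
        have hj : j = 0 := Fin.fin_one_eq_zero j
        subst hj
        calc rhoOn a S ≤ lam 0 := by rw [← hp]; exact hrho
          _ ≤ 2 * lam 0 := by linarith [h0 0]
  | succ m ih =>
      intro lam S h0 h1 hrho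
      have hpos : ∀ j, 0 < lam j := by
        intro j
        rcases lt_or_eq_of_le (h0 j) with h | h
        · exact h
        · exfalso
          have hz : ∏ k, lam k = 0 := Finset.prod_eq_zero (Finset.mem_univ j) h.symm
          have hgt := rho_pos a S
          rw [hz] at hrho
          linarith
      have hprod : ∏ j, lam j = lam 0 * ∏ j : Fin (m+1), lam j.succ := Fin.prod_univ_succ lam
      have hrest_le_one : ∏ j : Fin (m+1), lam j.succ ≤ 1 :=
        Finset.prod_le_one (fun j _ => h0 _)
          (fun j _ => le_of_lt (lt_trans (h1 _) (by norm_num)))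
      have hS0 : rhoOn a S ≤ 2 * lam 0 := by
        have h2 : rhoOn a S ≤ lam 0 := by
          refine le_trans hrho ?_
          rw [hprod]
          calc lam 0 * ∏ j : Fin (m+1), lam j.succ ≤ lam 0 * 1 :=
                mul_le_mul_of_nonneg_left hrest_le_one (h0 0)
            _ = lam 0 := mul_one _
        linarith [h0 0]
      set C := (S.powerset).filter (fun I => rhoOn a I ≤ 2 * lam 0) with hC
      have hSC : S ∈ C := Finset.mem_filter.2 ⟨Finset.mem_powerset.2 subset_rfl, hS0⟩
      obtain ⟨I, hIC, hImin⟩ := Finset.exists_min_image C Finset.card ⟨S, hSC⟩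
      have hIS : I ⊆ S := Finset.mem_powerset.1 (Finset.mem_filter.1 hIC).1
      have hIrho : rhoOn a I ≤ 2 * lam 0 := (Finset.mem_filter.1 hIC).2
      have hIne : I.Nonempty := by
        rw [Finset.nonempty_iff_ne_empty]
        rintro rfl
        have h2 := rho_empty a
        have h3 := h1 0
        linarith
      obtain ⟨i, hiI⟩ := hIne
      have herase : 2 * lam 0 < rhoOn a (I.erase i) := by
        by_contra h
        push_neg at h
        have hmem : I.erase i ∈ C := by
          rw [hC, Finset.mem_filter, Finset.mem_powerset]
          exact ⟨(Finset.erase_subset i I).trans hIS, h⟩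
        have h4 := hImin _ hmem
        have hcard := Finset.card_erase_lt_of_mem hiI
        omega
      have hIlow : lam 0 < rhoOn a I := by
        have h2 := rho_half a (Finset.notMem_erase i I)
        rw [Finset.insert_erase hiI] at h2
        linarith
      have hdisj : Disjoint I (S \ I) := Finset.disjoint_sdiff
      have hunion : I ∪ (S \ I) = S := Finset.union_sdiff_of_subset hIS
      have hrem : rhoOn a (S \ I) ≤ ∏ j : Fin (m+1), lam j.succ := by
        have hs := rho_submul a hdisj
        rw [hunion] at hs
        have h3 : lam 0 * rhoOn a (S \ I) ≤ lam 0 * ∏ j : Fin (m+1), lam j.succ := by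
          calc lam 0 * rhoOn a (S \ I) ≤ rhoOn a I * rhoOn a (S \ I) :=
                mul_le_mul_of_nonneg_right (le_of_lt hIlow) (rho_nonneg a _)
            _ ≤ rhoOn a S := hs
            _ ≤ lam 0 * ∏ j : Fin (m+1), lam j.succ := by rw [← hprod]; exact hrho
        exact le_of_mul_le_mul_left h3 (hpos 0)
      obtain ⟨parts', hdis', hcov', hsub', hrho'⟩ :=
        ih (fun j => lam j.succ) (S \ I) (fun j => h0 _) (fun j => h1 _) hrem
      refine ⟨Fin.cases I parts', ?_, ?_, ?_, ?_⟩
      · intro j k hjk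
        induction j using Fin.cases with
        | zero =>
            induction k using Fin.cases with
            | zero => exact absurd rfl hjk
            | succ k =>
                simp only [Fin.cases_zero, Fin.cases_succ]
                exact hdisj.mono_right (hsub' k)
        | succ j =>
            induction k using Fin.cases with
            | zero =>
                simp only [Fin.cases_zero, Fin.cases_succ]
                exact (hdisj.mono_right (hsub' j)).symm
            | succ k =>
                simp only [Fin.cases_succ]
                exact hdis' j k (fun h => hjk (by rw [h]))
      · intro i' hi'
        by_cases hmem : i' ∈ I
        · exact ⟨0, by simpa using hmem⟩
        · obtain ⟨j, hj⟩ := hcov' i' (Finset.mem_sdiff.2 ⟨hi', hmem⟩)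
          exact ⟨j.succ, by simpa using hj⟩
      · intro j
        induction j using Fin.cases with
        | zero => simpa using hIS
        | succ j =>
            simp only [Fin.cases_succ]
            exact (hsub' j).trans (Finset.sdiff_subset)
      · intro j
        induction j using Fin.cases with
        | zero => simpa using hIrho
        | succ j =>
            simp only [Fin.cases_succ]
            exact hrho' j

end Stmt3Aux


theorem stmt3 {n d m : ℕ} (hm : 1 ≤ m) (a : Fin n → EuclideanSpace ℝ (Fin d))
    (lam : Fin m → ℝ) (h0 : ∀ j, 0 ≤ lam j) (h1 : ∀ j, lam j < 1 / 2)
    (hρ : rhoOn a Finset.univ ≤ ∏ j, lam j) :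
    ∃ P : Fin n → Fin m, ∀ j : Fin m,
      rhoOn a (Finset.univ.filter fun i => P i = j) ≤ 2 * lam j := by
  obtain ⟨m', rfl⟩ : ∃ m', m = m' + 1 := by
    cases m with
    | zero => omega
    | succ m' => exact ⟨m', rfl⟩
  obtain ⟨parts, hdis, hcov, hsub, hbound⟩ :=
    Stmt3Aux.main a m' lam Finset.univ h0 h1 hρ
  have hP : ∀ i : Fin n, ∃ j, i ∈ parts j := fun i => hcov i (Finset.mem_univ i)
  refine ⟨fun i => (hP i).choose, ?_⟩
  intro j
  have hfib : (Finset.univ.filter fun i => (hP i).choose = j) = parts j := by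
    ext i'
    simp only [Finset.mem_filter, Finset.mem_univ, true_and]
    constructor
    · rintro rfl
      exact (hP i').choose_spec
    · intro h
      by_contra hne
      exact (Finset.disjoint_left.1 (hdis _ _ hne) (hP i').choose_spec) h
  rw [hfib]
  exact hbound j
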